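/- Let θ > 1 and for γ ∈ [√θ, θ] define the 1-max-search Pareto consistency η₁(γ) = θ/γ, and for γ ∈ (1, θ] define the one-way trading Pareto consistency η₂(γ) = θ/[θ/γ + (θ-1)(1 - (1/γ)ln((θ-1)/(γ-1)))]. Then for every γ ∈ [√θ, θ), η₂(γ) < η₁(γ), i.e., θ/γ + (θ-1)(1 - (1/γ)ln((θ-1)/(γ-1))) > γ. -/

import Mathlib

theorem stmt_16 (θ : ℝ) (hθ : 1 < θ) :
    ∀ γ ∈ Set.Ico (Real.sqrt θ) θ,
      θ / (θ / γ + (θ - 1) * (1 - (1 / γ) * Real.log ((θ - 1) / (γ - 1))))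
        < θ / γ ∧
      θ / γ + (θ - 1) * (1 - (1 / γ) * Real.log ((θ - 1) / (γ - 1))) > γ := by
  intro γ hγ
  obtain ⟨hγl, hγθ⟩ := hγ
  have hθ0 : (0:ℝ) < θ := by linarith
  have hsqrt1 : (1:ℝ) < Real.sqrt θ := by
    nlinarith [Real.sq_sqrt hθ0.le, Real.sqrt_nonneg θ]
  have hγ1 : (1:ℝ) < γ := lt_of_lt_of_le hsqrt1 hγl
  have hγ0 : (0:ℝ) < γ := by linarith
  have hsq : θ ≤ γ ^ 2 := by
    nlinarith [Real.sq_sqrt hθ0.le, Real.sqrt_nonneg θ]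
  have hγ1' : (0:ℝ) < γ - 1 := by linarith
  set L := Real.log ((θ - 1) / (γ - 1)) with hL
  have hr1 : (1:ℝ) < (θ - 1) / (γ - 1) := by
    rw [lt_div_iff₀ hγ1']; linarith
  have hlog0 : L < (θ - 1) / (γ - 1) - 1 :=
    Real.log_lt_sub_one_of_pos (by linarith) (ne_of_gt hr1)
  have hlog : (γ - 1) * L < θ - γ := by
    have h2 : (γ - 1) * ((θ - 1) / (γ - 1) - 1) = θ - γ := by
      field_simp
      ring
    nlinarith [mul_lt_mul_of_pos_left hlog0 hγ1']
  -- main inequality after clearing the denominator γ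
  have hkey : γ * γ < θ + (θ - 1) * (γ - L) := by
    nlinarith [mul_lt_mul_of_pos_left hlog (by linarith : (0:ℝ) < θ - 1),
      mul_nonneg (by linarith : (0:ℝ) ≤ θ - γ) (by linarith : (0:ℝ) ≤ γ ^ 2 - θ)]
  have hrw : θ / γ + (θ - 1) * (1 - (1 / γ) * L) = (θ + (θ - 1) * (γ - L)) / γ := by
    field_simp
  have hD : γ < θ / γ + (θ - 1) * (1 - (1 / γ) * L) := by
    rw [hrw, lt_div_iff₀ hγ0]; nlinarith [hkey]
  refine ⟨?_, hD⟩
  exact div_lt_div_of_pos_left hθ0 hγ0 hD
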